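/- Let q > 1 be a real number. Let X and Y be positive semidefinite matrices (of finite sizes d₁ and d₂ respectively) with ‖X‖_q = ‖Y‖_q = 1. Then ‖(X ⊗ 𝟙 + 𝟙 ⊗ Y − 𝟙)₊‖_q ≤ 1, where X ⊗ 𝟙 and 𝟙 ⊗ Y denote Kronecker products with identity matrices of the appropriate sizes and 𝟙 on its own denotes the identity matrix of size d₁·d₂. -/

import Mathlib

open Matrix ComplexOrder Kronecker Topology

/-- `Tr[A^q]` for a Hermitian matrix `A`, where `A^q` is the matrix power obtained by raising
each eigenvalue of `A` to the (real) power `q`; defined as `0` if `A` is not Hermitian. -/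
noncomputable def traceRpow {d : Type*} [Fintype d] [DecidableEq d]
    (q : ℝ) (A : Matrix d d ℂ) : ℝ :=
  if hA : A.IsHermitian then ∑ i, hA.eigenvalues i ^ q else 0

/-- The Schatten `q`-norm `‖A‖_q = (Tr[A^q])^{1/q}` of a positive semidefinite matrix `A`. -/
noncomputable def schattenNorm {d : Type*} [Fintype d] [DecidableEq d]
    (q : ℝ) (A : Matrix d d ℂ) : ℝ :=
  traceRpow q A ^ (1 / q)

/-- The positive part `A₊` of a Hermitian matrix `A`: each eigenvalue `λ` of `A` is replaced
by `max 0 λ` in a spectral decomposition; defined as `0` if `A` is not Hermitian. -/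
noncomputable def posPartMat {d : Type*} [Fintype d] [DecidableEq d]
    (A : Matrix d d ℂ) : Matrix d d ℂ :=
  if hA : A.IsHermitian then
    (hA.eigenvectorUnitary : Matrix d d ℂ) *
      Matrix.diagonal (Complex.ofReal ∘ fun i => max 0 (hA.eigenvalues i)) *
        star (hA.eigenvectorUnitary : Matrix d d ℂ)
  else 0

namespace SchattenAux

variable {n : Type*} [Fintype n] [DecidableEq n]

noncomputable def conjDiag (W : Matrix.unitaryGroup n ℂ) (d : n → ℝ) : Matrix n n ℂ :=
  (W : Matrix n n ℂ) * Matrix.diagonal (Complex.ofReal ∘ d) * star (W : Matrix n n ℂ)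

lemma isHermitian_conjDiag (W : Matrix.unitaryGroup n ℂ) (d : n → ℝ) :
    (conjDiag W d).IsHermitian := by
  rw [IsHermitian, ← star_eq_conjTranspose, conjDiag]
  simp only [StarMul.star_mul, star_star, mul_assoc]
  congr 1
  congr 1
  have h : star (Complex.ofReal ∘ d) = Complex.ofReal ∘ d := by
    funext i; simp [Complex.conj_ofReal]
  rw [star_eq_conjTranspose, diagonal_conjTranspose, h]

lemma spectrum_conjDiag (W : Matrix.unitaryGroup n ℂ) (d : n → ℝ) :
    spectrum ℝ (conjDiag W d) = Set.range d := by
  ext x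
  rw [conjDiag, Unitary.spectrum_star_right_conjugate, ← spectrum.algebraMap_mem_iff ℂ,
    spectrum_diagonal]
  simp [Function.comp]

lemma mem_spectrum_conjDiag (W : Matrix.unitaryGroup n ℂ) (d : n → ℝ) (i : n) :
    d i ∈ spectrum ℝ (conjDiag W d) := by
  rw [spectrum_conjDiag]; exact ⟨i, rfl⟩


@[simps]
noncomputable def conjDiagAux (W : Matrix.unitaryGroup n ℂ) (d : n → ℝ) :
    C(spectrum ℝ (conjDiag W d), ℝ) →⋆ₐ[ℝ] (Matrix n n ℂ) where
  toFun := fun g => (W : Matrix n n ℂ) *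
    diagonal (Complex.ofReal ∘ g ∘ (fun i ↦ ⟨d i, mem_spectrum_conjDiag W d i⟩))
    * star (W : Matrix n n ℂ)
  map_one' := by simp [Pi.one_def (M := fun _ : n ↦ ℂ)]
  map_mul' f g := by
    have {a b c e f g : Matrix n n ℂ} : (a * b * c) * (e * f * g) = a * (b * (c * e) * f) * g := by
      simp only [mul_assoc]
    simp only [this, ContinuousMap.coe_mul, SetLike.coe_mem, Unitary.star_mul_self_of_mem, mul_one,
      diagonal_mul_diagonal, Function.comp_apply]
    congr! with i
    simp
  map_zero' := by simp [Pi.zero_def (M := fun _ : n ↦ ℂ)]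
  map_add' f g := by
    simp only [ContinuousMap.coe_add, ← add_mul, ← mul_add, diagonal_add, Function.comp_apply]
    congr! with i
    simp
  commutes' r := by
    simp only [Function.comp_def, algebraMap_apply, smul_eq_mul, mul_one]
    rw [← mul_one (algebraMap _ _ _), ← Unitary.coe_mul_star_self W,
      ← Algebra.left_comm, Unitary.coe_star, mul_assoc]
    congr!
  map_star' f := by
    simp only [star_trivial, StarMul.star_mul, star_star, star_eq_conjTranspose (diagonal _),
      diagonal_conjTranspose, mul_assoc]
    congr!
    ext
    simp

lemma isClosedEmbedding_conjDiagAux (W : Matrix.unitaryGroup n ℂ) (d : n → ℝ) :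
    IsClosedEmbedding (conjDiagAux W d) := by
  have h0 : FiniteDimensional ℝ C(spectrum ℝ (conjDiag W d), ℝ) :=
    FiniteDimensional.of_injective (ContinuousMap.coeFnLinearMap ℝ (M := ℝ)) DFunLike.coe_injective
  refine LinearMap.isClosedEmbedding_of_injective (𝕜 := ℝ)
    (E := C(spectrum ℝ (conjDiag W d), ℝ))
    (F := Matrix n n ℂ) (f := conjDiagAux W d) <| LinearMap.ker_eq_bot'.mpr fun f hf ↦ ?_
  have h2 :
      diagonal (Complex.ofReal ∘ f ∘ fun i ↦ (⟨d i, mem_spectrum_conjDiag W d i⟩ :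
          spectrum ℝ (conjDiag W d)))
        = (0 : Matrix n n ℂ) := by
    replace hf : conjDiagAux W d f = 0 := hf
    rw [conjDiagAux_apply] at hf
    replace hf := congr($(hf) * (W : Matrix n n ℂ))
    simp only [mul_assoc, SetLike.coe_mem, Unitary.star_mul_self_of_mem, mul_one, zero_mul] at hf
    simpa [← mul_assoc] using congr((star W : Matrix n n ℂ) * $(hf))
  ext x
  simp only [ContinuousMap.zero_apply]
  obtain ⟨x, hx⟩ := x
  obtain ⟨i, rfl⟩ := spectrum_conjDiag W d ▸ hx
  rw [← diagonal_zero] at h2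
  have := (diagonal_eq_diagonal_iff).mp h2
  refine Complex.ofReal_eq_zero.mp (this i)

lemma conjDiagAux_id (W : Matrix.unitaryGroup n ℂ) (d : n → ℝ) :
    conjDiagAux W d (.restrict (spectrum ℝ (conjDiag W d)) (.id ℝ)) = conjDiag W d := by
  conv_rhs => rw [conjDiag]
  congr!

lemma cfc_conjDiag (W : Matrix.unitaryGroup n ℂ) (d : n → ℝ) (f : ℝ → ℝ) :
    cfc f (conjDiag W d) =
      (W : Matrix n n ℂ) * diagonal (Complex.ofReal ∘ f ∘ d) * star (W : Matrix n n ℂ) := by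
  have hA : IsSelfAdjoint (conjDiag W d) := isHermitian_conjDiag W d
  have := cfcHom_eq_of_continuous_of_map_id hA (conjDiagAux W d)
    (isClosedEmbedding_conjDiagAux W d).continuous (conjDiagAux_id W d)
  rw [cfc_apply f (conjDiag W d) hA
    (by rw [continuousOn_iff_continuous_restrict]; fun_prop), this]
  simp only [conjDiagAux_apply, ContinuousMap.coe_mk, Function.comp_def, Set.restrict_apply]


lemma trace_cfc_hermitian {B : Matrix n n ℂ} (hB : B.IsHermitian) (f : ℝ → ℝ) :
    (cfc f B).trace = ∑ i, (f (hB.eigenvalues i) : ℂ) := by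
  rw [hB.cfc_eq f, Matrix.IsHermitian.cfc, Unitary.conjStarAlgAut_apply,
    Matrix.trace_mul_cycle,
    Unitary.star_mul_self_of_mem (SetLike.coe_mem _), one_mul, Matrix.trace_diagonal]
  rfl

lemma sum_eigenvalues_rpow {B : Matrix n n ℂ} (hB : B.IsHermitian) (g : ℝ → ℝ) :
    ∑ i, g (hB.eigenvalues i) = ((cfc g B).trace).re := by
  rw [trace_cfc_hermitian hB, Complex.re_sum]
  simp


lemma posPartMat_eq_cfc {B : Matrix n n ℂ} (hB : B.IsHermitian) :
    posPartMat B = cfc (fun x : ℝ => max 0 x) B := by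
  rw [posPartMat, dif_pos hB, hB.cfc_eq, Matrix.IsHermitian.cfc]
  rfl

lemma continuous_rpow_const {q : ℝ} (hq : 0 < q) :
    Continuous (fun x : ℝ => x ^ q) :=
  continuous_iff_continuousAt.mpr fun x => Real.continuousAt_rpow_const x q (Or.inr hq.le)

lemma traceRpow_posPart (q : ℝ) (hq : 0 < q) {B : Matrix n n ℂ} (hB : B.IsHermitian) :
    traceRpow q (posPartMat B) = ((cfc (fun x : ℝ => (max 0 x) ^ q) B).trace).re := by
  have hP : (posPartMat B).IsHermitian := by
    rw [posPartMat_eq_cfc hB]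
    exact cfc_predicate _ B
  have hcomp := cfc_comp (R := ℝ) (fun x : ℝ => x ^ q) (fun x : ℝ => max 0 x) B hB
      ((continuous_rpow_const hq).continuousOn)
      ((continuous_const.max continuous_id).continuousOn)
  rw [traceRpow, dif_pos hP, sum_eigenvalues_rpow hP (fun x => x ^ q), posPartMat_eq_cfc hB,
    ← hcomp]
  rfl

lemma star_kronecker {m l : Type*} (A : Matrix m m ℂ) (B : Matrix l l ℂ) :
    star (A ⊗ₖ B) = star A ⊗ₖ star B := by
  ext ⟨i, j⟩ ⟨k, l⟩
  simp [Matrix.star_eq_conjTranspose, Matrix.conjTranspose_apply, Matrix.kroneckerMap_apply,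
    mul_comm]

lemma trace_cfc_conjDiag (W : Matrix.unitaryGroup n ℂ) (d : n → ℝ) (f : ℝ → ℝ) :
    (cfc f (conjDiag W d)).trace = ∑ i, (f (d i) : ℂ) := by
  rw [cfc_conjDiag, Matrix.trace_mul_cycle,
    Unitary.star_mul_self_of_mem (SetLike.coe_mem W), one_mul, Matrix.trace_diagonal]
  rfl

lemma sum_rpow_eq_one {ι : Type*} [Fintype ι] {q : ℝ} (hq : 0 < q) {v : ι → ℝ}
    (hv : ∀ i, 0 ≤ v i) (h : (∑ i, v i ^ q) ^ (1 / q) = 1) : ∑ i, v i ^ q = 1 := by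
  have ht0 : 0 ≤ ∑ i, v i ^ q :=
    Finset.sum_nonneg fun i _ => Real.rpow_nonneg (hv i) q
  calc ∑ i, v i ^ q = (∑ i, v i ^ q) ^ ((1 / q) * q) := by
        rw [one_div_mul_cancel hq.ne', Real.rpow_one]
    _ = ((∑ i, v i ^ q) ^ (1 / q)) ^ q := Real.rpow_mul ht0 _ _
    _ = 1 ^ q := by rw [h]
    _ = 1 := Real.one_rpow q

lemma vals_le_one {ι : Type*} [Fintype ι] {q : ℝ} (hq : 0 < q) {v : ι → ℝ}
    (hv : ∀ i, 0 ≤ v i) (h : ∑ i, v i ^ q = 1) (i : ι) : v i ≤ 1 := by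
  have h1 : v i ^ q ≤ 1 := h ▸ Finset.single_le_sum
    (fun j _ => Real.rpow_nonneg (hv j) q) (Finset.mem_univ i)
  have := Real.rpow_le_rpow (Real.rpow_nonneg (hv i) q) h1 (by positivity : (0:ℝ) ≤ 1 / q)
  rwa [← Real.rpow_mul (hv i), mul_one_div, div_self hq.ne', Real.rpow_one, Real.one_rpow]
    at this

lemma key_scalar {q a b : ℝ} (hq : 0 < q) (ha0 : 0 ≤ a) (ha1 : a ≤ 1) (hb0 : 0 ≤ b)
    (hb1 : b ≤ 1) : max 0 (a + b - 1) ^ q ≤ a ^ q * b ^ q := by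
  have h1 : max 0 (a + b - 1) ≤ a * b := max_le (mul_nonneg ha0 hb0) (by nlinarith)
  calc max 0 (a + b - 1) ^ q ≤ (a * b) ^ q :=
        Real.rpow_le_rpow (le_max_left _ _) h1 hq.le
    _ = a ^ q * b ^ q := Real.mul_rpow ha0 hb0

end SchattenAux


open SchattenAux in
/-- **Corollary (Audenaert).** For `q > 1` and positive semidefinite matrices `X`, `Y` with
`‖X‖_q = ‖Y‖_q = 1`, we have `‖(X ⊗ 𝟙 + 𝟙 ⊗ Y − 𝟙)₊‖_q ≤ 1`. -/
theorem schattenNorm_posPart_le_one {d₁ d₂ : ℕ} (q : ℝ) (hq : 1 < q)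
    (X : Matrix (Fin d₁) (Fin d₁) ℂ) (Y : Matrix (Fin d₂) (Fin d₂) ℂ)
    (hX : X.PosSemidef) (hY : Y.PosSemidef)
    (hXnorm : schattenNorm q X = 1) (hYnorm : schattenNorm q Y = 1) :
    schattenNorm q
      (posPartMat (X ⊗ₖ (1 : Matrix (Fin d₂) (Fin d₂) ℂ)
        + (1 : Matrix (Fin d₁) (Fin d₁) ℂ) ⊗ₖ Y
        - (1 : Matrix (Fin d₁ × Fin d₂) (Fin d₁ × Fin d₂) ℂ))) ≤ 1 := by
  classical
  have hq0 : (0:ℝ) < q := lt_trans zero_lt_one hq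
  have hX' : X.IsHermitian := hX.isHermitian
  have hY' : Y.IsHermitian := hY.isHermitian
  have hu1 : (hX'.eigenvectorUnitary : Matrix (Fin d₁) (Fin d₁) ℂ) *
      star (hX'.eigenvectorUnitary : Matrix (Fin d₁) (Fin d₁) ℂ) = 1 :=
    Unitary.mul_star_self_of_mem (SetLike.coe_mem _)
  have hu2 : (hY'.eigenvectorUnitary : Matrix (Fin d₂) (Fin d₂) ℂ) *
      star (hY'.eigenvectorUnitary : Matrix (Fin d₂) (Fin d₂) ℂ) = 1 :=
    Unitary.mul_star_self_of_mem (SetLike.coe_mem _)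
  have hWmem : ((hX'.eigenvectorUnitary : Matrix (Fin d₁) (Fin d₁) ℂ) ⊗ₖ
      (hY'.eigenvectorUnitary : Matrix (Fin d₂) (Fin d₂) ℂ)) ∈
      Matrix.unitaryGroup (Fin d₁ × Fin d₂) ℂ := by
    rw [Matrix.mem_unitaryGroup_iff, SchattenAux.star_kronecker, ← Matrix.mul_kronecker_mul,
      hu1, hu2, Matrix.one_kronecker_one]
  have hdiag : Matrix.diagonal (Complex.ofReal ∘
        (fun p : Fin d₁ × Fin d₂ => hX'.eigenvalues p.1 + hY'.eigenvalues p.2 - 1)) =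
      (Matrix.diagonal (Complex.ofReal ∘ hX'.eigenvalues)) ⊗ₖ (1 : Matrix (Fin d₂) (Fin d₂) ℂ)
        + (1 : Matrix (Fin d₁) (Fin d₁) ℂ) ⊗ₖ (Matrix.diagonal (Complex.ofReal ∘ hY'.eigenvalues))
        - (1 : Matrix (Fin d₁ × Fin d₂) (Fin d₁ × Fin d₂) ℂ) := by
    ext ⟨i, j⟩ ⟨k, l⟩
    by_cases hik : i = k <;> by_cases hjl : j = l <;>
      simp [Matrix.sub_apply, Matrix.add_apply, Matrix.diagonal_apply,
        Matrix.kroneckerMap_apply, Matrix.one_apply, Prod.ext_iff,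
        Function.comp, hik, hjl]
  have e1 : ((hX'.eigenvectorUnitary : Matrix (Fin d₁) (Fin d₁) ℂ) ⊗ₖ
        (hY'.eigenvectorUnitary : Matrix (Fin d₂) (Fin d₂) ℂ)) *
      ((Matrix.diagonal (Complex.ofReal ∘ hX'.eigenvalues)) ⊗ₖ
        (1 : Matrix (Fin d₂) (Fin d₂) ℂ)) *
      star ((hX'.eigenvectorUnitary : Matrix (Fin d₁) (Fin d₁) ℂ) ⊗ₖ
        (hY'.eigenvectorUnitary : Matrix (Fin d₂) (Fin d₂) ℂ))
      = X ⊗ₖ (1 : Matrix (Fin d₂) (Fin d₂) ℂ) := by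
    rw [SchattenAux.star_kronecker, ← Matrix.mul_kronecker_mul, ← Matrix.mul_kronecker_mul,
      mul_one, hu2]
    exact congrArg (fun M => M ⊗ₖ (1 : Matrix (Fin d₂) (Fin d₂) ℂ)) hX'.spectral_theorem.symm
  have e2 : ((hX'.eigenvectorUnitary : Matrix (Fin d₁) (Fin d₁) ℂ) ⊗ₖ
        (hY'.eigenvectorUnitary : Matrix (Fin d₂) (Fin d₂) ℂ)) *
      ((1 : Matrix (Fin d₁) (Fin d₁) ℂ) ⊗ₖ
        (Matrix.diagonal (Complex.ofReal ∘ hY'.eigenvalues))) *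
      star ((hX'.eigenvectorUnitary : Matrix (Fin d₁) (Fin d₁) ℂ) ⊗ₖ
        (hY'.eigenvectorUnitary : Matrix (Fin d₂) (Fin d₂) ℂ))
      = (1 : Matrix (Fin d₁) (Fin d₁) ℂ) ⊗ₖ Y := by
    rw [SchattenAux.star_kronecker, ← Matrix.mul_kronecker_mul, ← Matrix.mul_kronecker_mul,
      mul_one, hu1]
    exact congrArg (fun M => (1 : Matrix (Fin d₁) (Fin d₁) ℂ) ⊗ₖ M) hY'.spectral_theorem.symm
  have e3 : ((hX'.eigenvectorUnitary : Matrix (Fin d₁) (Fin d₁) ℂ) ⊗ₖ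
        (hY'.eigenvectorUnitary : Matrix (Fin d₂) (Fin d₂) ℂ)) *
      (1 : Matrix (Fin d₁ × Fin d₂) (Fin d₁ × Fin d₂) ℂ) *
      star ((hX'.eigenvectorUnitary : Matrix (Fin d₁) (Fin d₁) ℂ) ⊗ₖ
        (hY'.eigenvectorUnitary : Matrix (Fin d₂) (Fin d₂) ℂ)) = 1 := by
    rw [mul_one, Unitary.mul_star_self_of_mem hWmem]
  have hH : X ⊗ₖ (1 : Matrix (Fin d₂) (Fin d₂) ℂ)
      + (1 : Matrix (Fin d₁) (Fin d₁) ℂ) ⊗ₖ Y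
      - (1 : Matrix (Fin d₁ × Fin d₂) (Fin d₁ × Fin d₂) ℂ)
      = SchattenAux.conjDiag ⟨_, hWmem⟩
          (fun p : Fin d₁ × Fin d₂ => hX'.eigenvalues p.1 + hY'.eigenvalues p.2 - 1) := by
    rw [SchattenAux.conjDiag]
    show _ = ((hX'.eigenvectorUnitary : Matrix (Fin d₁) (Fin d₁) ℂ) ⊗ₖ
        (hY'.eigenvectorUnitary : Matrix (Fin d₂) (Fin d₂) ℂ)) * _ * _
    rw [hdiag]
    simp only [Matrix.mul_add, Matrix.add_mul, Matrix.mul_sub, Matrix.sub_mul]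
    rw [e1, e2, e3]
  have hHherm : (X ⊗ₖ (1 : Matrix (Fin d₂) (Fin d₂) ℂ)
      + (1 : Matrix (Fin d₁) (Fin d₁) ℂ) ⊗ₖ Y
      - (1 : Matrix (Fin d₁ × Fin d₂) (Fin d₁ × Fin d₂) ℂ)).IsHermitian := by
    rw [hH]; exact SchattenAux.isHermitian_conjDiag _ _
  have htr' : traceRpow q (posPartMat (X ⊗ₖ (1 : Matrix (Fin d₂) (Fin d₂) ℂ)
      + (1 : Matrix (Fin d₁) (Fin d₁) ℂ) ⊗ₖ Y
      - (1 : Matrix (Fin d₁ × Fin d₂) (Fin d₁ × Fin d₂) ℂ)))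
      = ∑ p : Fin d₁ × Fin d₂,
          max 0 (hX'.eigenvalues p.1 + hY'.eigenvalues p.2 - 1) ^ q := by
    rw [SchattenAux.traceRpow_posPart q hq0 hHherm, hH,
      SchattenAux.trace_cfc_conjDiag _ _ (fun x => max 0 x ^ q), Complex.re_sum]
    simp
  have hXtr : ∑ i, hX'.eigenvalues i ^ q = 1 := by
    apply SchattenAux.sum_rpow_eq_one hq0 (fun i => hX.eigenvalues_nonneg i)
    rw [schattenNorm, traceRpow, dif_pos hX'] at hXnorm
    exact hXnorm
  have hYtr : ∑ i, hY'.eigenvalues i ^ q = 1 := by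
    apply SchattenAux.sum_rpow_eq_one hq0 (fun i => hY.eigenvalues_nonneg i)
    rw [schattenNorm, traceRpow, dif_pos hY'] at hYnorm
    exact hYnorm
  have hbound : ∑ p : Fin d₁ × Fin d₂,
      max 0 (hX'.eigenvalues p.1 + hY'.eigenvalues p.2 - 1) ^ q ≤ 1 := by
    calc ∑ p : Fin d₁ × Fin d₂,
        max 0 (hX'.eigenvalues p.1 + hY'.eigenvalues p.2 - 1) ^ q
        ≤ ∑ p : Fin d₁ × Fin d₂, hX'.eigenvalues p.1 ^ q * hY'.eigenvalues p.2 ^ q := by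
          apply Finset.sum_le_sum
          intro p _
          exact SchattenAux.key_scalar hq0 (hX.eigenvalues_nonneg p.1)
            (SchattenAux.vals_le_one hq0 (fun i => hX.eigenvalues_nonneg i) hXtr p.1)
            (hY.eigenvalues_nonneg p.2)
            (SchattenAux.vals_le_one hq0 (fun i => hY.eigenvalues_nonneg i) hYtr p.2)
      _ = (∑ i, hX'.eigenvalues i ^ q) * (∑ j, hY'.eigenvalues j ^ q) := by
          rw [Finset.sum_mul_sum]
          exact Fintype.sum_prod_type _
      _ = 1 := by rw [hXtr, hYtr, mul_one]
  have hnn : (0:ℝ) ≤ ∑ p : Fin d₁ × Fin d₂,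
      max 0 (hX'.eigenvalues p.1 + hY'.eigenvalues p.2 - 1) ^ q :=
    Finset.sum_nonneg fun p _ => Real.rpow_nonneg (le_max_left _ _) q
  rw [schattenNorm, htr']
  exact Real.rpow_le_one hnn hbound (by positivity)
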